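/- Let l > 0 be a real number and let q : ℝ → ℝ be Lebesgue integrable on [0, l]. Then sup_{x ∈ [0,l]} ∫₀ˣ e^{−2τ(x−t)} |q(t)| dt → 0 as τ → +∞; that is, for every ε > 0 there exists τ₀ > 0 such that for all τ ≥ τ₀ and all x ∈ [0, l] one has ∫₀ˣ e^{−2τ(x−t)} |q(t)| dt ≤ ε. -/

import Mathlib

open Real MeasureTheory Filter intervalIntegral

/-- For `q` integrable on `[0, l]`, the quantity
`∫₀ˣ e^{-2τ(x-t)} |q(t)| dt` tends to `0` as `τ → +∞`, uniformly in `x ∈ [0, l]`. -/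
theorem convolution_decay (l : ℝ) (hl : 0 < l) (q : ℝ → ℝ)
    (hq : IntegrableOn q (Set.Icc 0 l)) :
    ∀ ε > 0, ∃ τ₀ > 0, ∀ τ ≥ τ₀, ∀ x ∈ Set.Icc 0 l,
      (∫ t in (0:ℝ)..x, Real.exp (-2 * τ * (x - t)) * |q t|) ≤ ε := by
  intro ε hε
  set f : ℝ → ℝ := fun t => |q t| with hfdef
  have hf : IntegrableOn f (Set.Icc 0 l) := hq.abs
  have hfm : AEStronglyMeasurable f (volume.restrict (Set.Icc 0 l)) := hf.aestronglyMeasurable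
  have hfnn : ∀ t, 0 ≤ f t := fun t => abs_nonneg _
  have hmin : ∀ n : ℕ, IntegrableOn (fun t => min (f t) n) (Set.Icc 0 l) := by
    intro n
    refine Integrable.mono' hf (hfm.inf aestronglyMeasurable_const) ?_
    filter_upwards with t
    rw [Real.norm_eq_abs, abs_of_nonneg (le_min (hfnn t) (Nat.cast_nonneg n))]
    exact min_le_left _ _
  -- dominated convergence: the truncation error tends to 0
  have hDCT : Tendsto (fun n : ℕ => ∫ t in Set.Icc 0 l, (f t - min (f t) n))
      atTop (nhds (∫ t in Set.Icc 0 l, (0:ℝ))) := by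
    refine tendsto_integral_of_dominated_convergence f
      (fun n => (hfm.sub ((hmin n).aestronglyMeasurable))) hf ?_ ?_
    · intro n
      filter_upwards with t
      rw [Real.norm_eq_abs, abs_of_nonneg (by simp [hfnn t] : (0:ℝ) ≤ f t - min (f t) n)]
      have : 0 ≤ min (f t) n := le_min (hfnn t) (Nat.cast_nonneg n)
      linarith
    · filter_upwards with t
      refine tendsto_atTop_of_eventually_const (i₀ := ⌈f t⌉₊) fun n hn => ?_
      have : f t ≤ (n : ℝ) := le_trans (Nat.le_ceil _) (by exact_mod_cast hn)
      simp [min_eq_left this]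
  simp only [MeasureTheory.integral_zero] at hDCT
  obtain ⟨M, hM⟩ : ∃ M : ℕ, ∫ t in Set.Icc 0 l, (f t - min (f t) M) < ε / 2 := by
    have := (hDCT.eventually (eventually_lt_nhds (by positivity : (0:ℝ) < ε / 2))).exists
    exact this
  refine ⟨max 1 (M / ε), lt_of_lt_of_le one_pos (le_max_left _ _), ?_⟩
  intro τ hτ x hx
  have hτ1 : (1:ℝ) ≤ τ := le_trans (le_max_left _ _) hτ
  have hτ0 : 0 < τ := lt_of_lt_of_le one_pos hτ1
  have hMτ : (M : ℝ) ≤ τ * ε := by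
    have h1 : (M:ℝ) / ε ≤ τ := le_trans (le_max_right _ _) hτ
    calc (M:ℝ) = (M / ε) * ε := by field_simp
    _ ≤ τ * ε := by nlinarith
  obtain ⟨hx0, hxl⟩ := hx
  have hsub : Set.Ioc 0 x ⊆ Set.Icc 0 l := fun t ht =>
    ⟨le_of_lt ht.1, le_trans ht.2 hxl⟩
  have hfI : IntegrableOn f (Set.Ioc 0 x) := hf.mono_set hsub
  set e : ℝ → ℝ := fun t => Real.exp (-2 * τ * (x - t)) with hedef
  have he_pos : ∀ t, 0 < e t := fun t => Real.exp_pos _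
  have he_le : ∀ t ∈ Set.Ioc 0 x, e t ≤ 1 := by
    intro t ht
    rw [hedef]
    refine Real.exp_le_one_iff.mpr ?_
    nlinarith [ht.2, hτ0]
  have hec : Continuous e := by
    rw [hedef]; continuity
  have hminI : IntegrableOn (fun t => min (f t) M) (Set.Ioc 0 x) := (hmin M).mono_set hsub
  have hef : IntegrableOn (fun t => e t * f t) (Set.Ioc 0 x) := by
    refine Integrable.mono' hfI
      (hec.aestronglyMeasurable.restrict.mul hfI.aestronglyMeasurable) ?_
    rw [ae_restrict_iff' measurableSet_Ioc]
    filter_upwards with t ht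
    rw [Real.norm_eq_abs, abs_of_nonneg (mul_nonneg (he_pos t).le (hfnn t))]
    nlinarith [he_le t ht, hfnn t, he_pos t]
  have hemin : IntegrableOn (fun t => e t * min (f t) M) (Set.Ioc 0 x) := by
    refine Integrable.mono' hfI
      (hec.aestronglyMeasurable.restrict.mul hminI.aestronglyMeasurable) ?_
    rw [ae_restrict_iff' measurableSet_Ioc]
    filter_upwards with t ht
    have h0 : 0 ≤ min (f t) M := le_min (hfnn t) (Nat.cast_nonneg M)
    rw [Real.norm_eq_abs, abs_of_nonneg (mul_nonneg (he_pos t).le h0)]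
    nlinarith [he_le t ht, min_le_left (f t) (M:ℝ), he_pos t]
  -- bound the truncated part: ∫ e * min ≤ M / (2τ)
  have hA : (∫ t in Set.Ioc 0 x, e t * min (f t) M) ≤ ε / 2 := by
    have h1 : (∫ t in Set.Ioc 0 x, e t * min (f t) M) ≤ ∫ t in Set.Ioc 0 x, (M : ℝ) * e t := by
      refine setIntegral_mono_on hemin ((continuous_const.mul hec).integrableOn_Ioc)
        measurableSet_Ioc ?_
      intro t ht
      have := min_le_right (f t) (M:ℝ)
      nlinarith [he_pos t]
    have h2 : (∫ t in Set.Ioc 0 x, (M:ℝ) * e t) = (M:ℝ) * ∫ t in Set.Ioc 0 x, e t := by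
      rw [MeasureTheory.integral_const_mul]
    have h3 : (∫ t in Set.Ioc 0 x, e t) = (1 - Real.exp (-2 * τ * x)) / (2 * τ) := by
      rw [← intervalIntegral.integral_of_le hx0]
      have hderiv : ∀ t ∈ Set.uIcc 0 x,
          HasDerivAt (fun s => Real.exp (-2 * τ * (x - s)) / (2 * τ)) (e t) t := by
        intro t _
        have h1 : HasDerivAt (fun s : ℝ => -2 * τ * (x - s)) (2 * τ) t := by
          have := ((hasDerivAt_id t).const_sub x).const_mul (-2 * τ)
          simpa using this
        have := (h1.exp).div_const (2 * τ)
        refine this.congr_deriv ?_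
        rw [hedef]
        field_simp
      rw [intervalIntegral.integral_eq_sub_of_hasDerivAt hderiv
        (hec.continuousOn.intervalIntegrable)]
      rw [sub_self, mul_zero, Real.exp_zero, sub_zero]
      ring
    have h4 : (1 - Real.exp (-2 * τ * x)) / (2 * τ) ≤ 1 / (2 * τ) := by
      have := (Real.exp_pos (-2 * τ * x)).le
      apply div_le_div_of_nonneg_right ?_ (by positivity : (0:ℝ) ≤ 2 * τ)
      linarith
    calc (∫ t in Set.Ioc 0 x, e t * min (f t) M)
        ≤ ∫ t in Set.Ioc 0 x, (M:ℝ) * e t := h1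
      _ = (M:ℝ) * ∫ t in Set.Ioc 0 x, e t := h2
      _ = (M:ℝ) * ((1 - Real.exp (-2 * τ * x)) / (2 * τ)) := by rw [h3]
      _ ≤ (M:ℝ) * (1 / (2 * τ)) := mul_le_mul_of_nonneg_left h4 (Nat.cast_nonneg M)
      _ = (M:ℝ) / (2 * τ) := by ring
      _ ≤ ε / 2 := by
          rw [div_le_div_iff₀ (by positivity) (by norm_num)]
          nlinarith
  -- bound the error part
  have hB : (∫ t in Set.Ioc 0 x, e t * f t) - (∫ t in Set.Ioc 0 x, e t * min (f t) M)
      ≤ ε / 2 := by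
    rw [← integral_sub hef hemin]
    have h1 : (∫ t in Set.Ioc 0 x, (e t * f t - e t * min (f t) M))
        ≤ ∫ t in Set.Ioc 0 x, (f t - min (f t) M) := by
      refine setIntegral_mono_on (hef.sub hemin) ((hfI.sub hminI)) measurableSet_Ioc ?_
      intro t ht
      have h0 : 0 ≤ f t - min (f t) M := by simp [hfnn t]
      have := he_le t ht
      have := (he_pos t).le
      nlinarith
    have h2 : (∫ t in Set.Ioc 0 x, (f t - min (f t) M))
        ≤ ∫ t in Set.Icc 0 l, (f t - min (f t) M) := by
      refine setIntegral_mono_set (hf.sub (hmin M)) ?_ (HasSubset.Subset.eventuallyLE hsub)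
      filter_upwards with t
      exact sub_nonneg.mpr (min_le_left _ _)
    linarith
  rw [intervalIntegral.integral_of_le hx0]
  have : (∫ t in Set.Ioc 0 x, Real.exp (-2 * τ * (x - t)) * |q t|)
      = ∫ t in Set.Ioc 0 x, e t * f t := rfl
  rw [this]
  linarith
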